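/- Let f : ℂ → ℂ be continuous on the closed disk {z : |z| ≤ R} and suppose: (1) for all z with r < |z| < R, either |f(z)| ≤ g(|z|) or |f(z)| ≥ h(|z|), where g, h : (r,R) → ℝ are continuous with g(u) < h(u) for all u ∈ (r,R); (2) for real u ∈ (r,R), f(u) is real with |f(u)| ≤ g(u). Then |f(z)| ≤ g(|z|) for all z with r < |z| < R. -/

import Mathlib

/-- Connectedness/continuity argument of Lemma 3.6(b): the lower alternative of the
dichotomy holds throughout the annulus. -/
theorem stmt_10 (f : ℂ → ℂ) (r R : ℝ) (hr : 0 ≤ r) (hrR : r < R)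
    (hf : ContinuousOn f {z : ℂ | ‖z‖ ≤ R})
    (g h : ℝ → ℝ)
    (hg : ContinuousOn g (Set.Ioo r R)) (hh : ContinuousOn h (Set.Ioo r R))
    (hgh : ∀ u ∈ Set.Ioo r R, g u < h u)
    (hdich : ∀ z : ℂ, r < ‖z‖ → ‖z‖ < R →
      ‖f z‖ ≤ g (‖z‖) ∨ h (‖z‖) ≤ ‖f z‖)
    (hreal : ∀ u ∈ Set.Ioo r R, (f (u : ℂ)).im = 0 ∧ ‖f (u : ℂ)‖ ≤ g u) :
    ∀ z : ℂ, r < ‖z‖ → ‖z‖ < R →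
      ‖f z‖ ≤ g (‖z‖) := by
  intro z hz1 hz2
  by_contra hle
  set u := ‖z‖ with hu
  have hu0 : 0 ≤ u := (norm_nonneg z)
  have huIoo : u ∈ Set.Ioo r R := ⟨hz1, hz2⟩
  have hzh : h u ≤ ‖f z‖ := (hdich z hz1 hz2).resolve_left hle
  -- the sphere of radius u
  set S : Set ℂ := Metric.sphere (0 : ℂ) u with hS
  have hzS : z ∈ S := by simp [hS, Complex.dist_eq, hu]
  have huS : (u : ℂ) ∈ S := by
    simp [hS, Complex.dist_eq, Complex.norm_real, abs_of_nonneg hu0]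
  have habs : ∀ w ∈ S, ‖w‖ = u := by
    intro w hw
    simpa [hS, Complex.dist_eq] using hw
  have hSconn : IsPreconnected S := by
    refine (isConnected_sphere ?_ (0 : ℂ) hu0).isPreconnected
    rw [Complex.rank_real_complex]
    norm_num
  have hSsub : S ⊆ {z : ℂ | ‖z‖ ≤ R} := by
    intro w hw
    simp only [Set.mem_setOf_eq, habs w hw]
    exact le_of_lt hz2
  have hφ : ContinuousOn (fun w => ‖f w‖) S :=
    (continuous_norm.comp_continuousOn (hf.mono hSsub))
  -- intermediate value
  set c : ℝ := (g u + h u) / 2 with hc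
  have hgc : g u < c := by
    have := hgh u huIoo; simp [hc]; linarith
  have hch : c < h u := by
    have := hgh u huIoo; simp [hc]; linarith
  have hcmem : c ∈ Set.Icc (‖f (u : ℂ)‖) (‖f z‖) := by
    constructor
    · exact le_trans (hreal u huIoo).2 (le_of_lt hgc)
    · exact le_trans (le_of_lt hch) hzh
  obtain ⟨w, hwS, hwc⟩ := hSconn.intermediate_value huS hzS hφ hcmem
  have hwu : ‖w‖ = u := habs w hwS
  have := hdich w (by rw [hwu]; exact hz1) (by rw [hwu]; exact hz2)
  have hwc' : ‖f w‖ = c := hwc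
  rw [hwu, hwc'] at this
  rcases this with h1 | h1
  · linarith
  · linarith
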